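/- Let E be the bivariate Rayleigh quotient of a symmetric matrix H on ℝⁿ with simple ground state (eigenvalue E*, unit eigenvector ψ*) and spectral gap γ > 0. Then at the critical point Z* = (ψ*, ψ*), the flipped Hessian satisfies ⟨RX, ∇²E(Z*) X⟩ ≥ 0 for all X = (u, v) with u, v orthogonal to ψ*, with equality only if X = 0; more precisely ⟨RX, ∇²E(Z*)X⟩ ≥ γ(‖u‖² + ‖v‖²) for such X, where R(u,v) = (v,u). -/

import Mathlib

open scoped RealInnerProductSpace

theorem gap_lemma
    {n : ℕ} (T : EuclideanSpace ℝ (Fin n) →L[ℝ] EuclideanSpace ℝ (Fin n))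
    (hsym : ∀ x y, ⟪T x, y⟫ = ⟪x, T y⟫)
    (E₀ γ : ℝ)
    (ψ : EuclideanSpace ℝ (Fin n))
    (hsimple : Module.End.eigenspace
        (T : EuclideanSpace ℝ (Fin n) →ₗ[ℝ] EuclideanSpace ℝ (Fin n)) E₀
      = Submodule.span ℝ {ψ})
    (hgap : ∀ μ ∈ spectrum ℝ T, μ ≠ E₀ → E₀ + γ ≤ μ) :
    ∀ w : EuclideanSpace ℝ (Fin n), ⟪w, ψ⟫ = 0 → (E₀ + γ) * ‖w‖ ^ 2 ≤ ⟪w, T w⟫ := by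
  intro w hw
  have hTsym : (T : EuclideanSpace ℝ (Fin n) →ₗ[ℝ] EuclideanSpace ℝ (Fin n)).IsSymmetric :=
    fun x y => hsym x y
  have hrank : Module.finrank ℝ (EuclideanSpace ℝ (Fin n)) = n := finrank_euclideanSpace_fin
  set b := hTsym.eigenvectorBasis hrank with hb
  set μ := hTsym.eigenvalues hrank with hμ
  have happ : ∀ i, T (b i) = μ i • b i := fun i => hTsym.apply_eigenvectorBasis hrank i
  -- each relevant eigenvalue is ≥ E₀ + γ
  have key : ∀ i, ⟪b i, w⟫ ≠ 0 → E₀ + γ ≤ μ i := by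
    intro i hi
    by_cases hE : μ i = E₀
    · exfalso
      have hmem : b i ∈ Module.End.eigenspace
          (T : EuclideanSpace ℝ (Fin n) →ₗ[ℝ] EuclideanSpace ℝ (Fin n)) E₀ := by
        rw [Module.End.mem_eigenspace_iff]
        simpa [hE] using happ i
      rw [hsimple, Submodule.mem_span_singleton] at hmem
      obtain ⟨c, hc⟩ := hmem
      apply hi
      rw [← hc, real_inner_smul_left]
      rw [real_inner_comm] at hw
      rw [hw, mul_zero]
    · refine hgap (μ i) ?_ hE
      rw [spectrum.mem_iff]
      intro hU
      obtain ⟨u, hu⟩ := hU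
      have hker : (algebraMap ℝ _ (μ i) - T) (b i) = 0 := by
        simp [ContinuousLinearMap.sub_apply, Module.algebraMap_end_apply, happ i]
      have hbz : b i = 0 := by
        have := congrArg (fun f : EuclideanSpace ℝ (Fin n) →L[ℝ] EuclideanSpace ℝ (Fin n) =>
          f (b i)) u.inv_mul
        simp only [hu] at this
        simpa [ContinuousLinearMap.mul_apply, hker] using this.symm
      exact (b.toBasis.ne_zero i) (by simpa using hbz)
  -- expand in the eigenbasis
  have hTw : ⟪w, T w⟫ = ∑ i, μ i * (⟪b i, w⟫ * ⟪b i, w⟫) := by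
    rw [← b.sum_inner_mul_inner w (T w)]
    congr 1; funext i
    have : ⟪b i, T w⟫ = μ i * ⟪b i, w⟫ := by
      rw [← hsym, happ i, real_inner_smul_left]
    rw [this, real_inner_comm w (b i)]; ring
  have hnw : ‖w‖ ^ 2 = ∑ i, ⟪b i, w⟫ * ⟪b i, w⟫ := by
    rw [← real_inner_self_eq_norm_sq, ← b.sum_inner_mul_inner w w]
    congr 1; funext i
    rw [real_inner_comm w (b i)]
  rw [hTw, hnw, Finset.mul_sum]
  apply Finset.sum_le_sum
  intro i _
  by_cases hi : ⟪b i, w⟫ = 0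
  · simp [hi]
  · exact mul_le_mul_of_nonneg_right (key i hi) (mul_self_nonneg _)

noncomputable section BRQAux

variable {n : ℕ}

private abbrev BRQ.F (n : ℕ) := EuclideanSpace ℝ (Fin n)
private abbrev BRQ.P (n : ℕ) := WithLp 2 (BRQ.F n × BRQ.F n)

namespace BRQ

def p1 (n : ℕ) : P n →L[ℝ] F n :=
  (ContinuousLinearMap.fst ℝ (F n) (F n)).comp
    (WithLp.prodContinuousLinearEquiv 2 ℝ (F n) (F n)).toContinuousLinearMap

def p2 (n : ℕ) : P n →L[ℝ] F n :=
  (ContinuousLinearMap.snd ℝ (F n) (F n)).comp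
    (WithLp.prodContinuousLinearEquiv 2 ℝ (F n) (F n)).toContinuousLinearMap

def es (n : ℕ) : (F n × F n) →L[ℝ] P n :=
  ((WithLp.prodContinuousLinearEquiv 2 ℝ (F n) (F n)).symm).toContinuousLinearMap

def Nf (T : F n →L[ℝ] F n) : P n → ℝ := fun Z => ⟪p2 n Z, T (p1 n Z)⟫

def Df (n : ℕ) : P n → ℝ := fun Z => ⟪p2 n Z, p1 n Z⟫

def Amap (T : F n →L[ℝ] F n) : P n →L[ℝ] P n :=
  (es n).comp ((T.comp (p2 n)).prod (T.comp (p1 n)))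

def Bmap (n : ℕ) : P n →L[ℝ] P n := (es n).comp ((p2 n).prod (p1 n))

def Gf (T : F n →L[ℝ] F n) : P n → P n := fun Z =>
  (Df n Z)⁻¹ • Amap T Z - (Nf T Z * ((Df n Z)⁻¹ * (Df n Z)⁻¹)) • Bmap n Z

def LN (T : F n →L[ℝ] F n) (Z : P n) : P n →L[ℝ] ℝ :=
  (fderivInnerCLM ℝ (p2 n Z, T (p1 n Z))).comp ((p2 n).prod (T.comp (p1 n)))

def LD (Z : P n) : P n →L[ℝ] ℝ :=
  (fderivInnerCLM ℝ (p2 n Z, p1 n Z)).comp ((p2 n).prod (p1 n))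

theorem hasFDerivAt_Nf (T : F n →L[ℝ] F n) (Z : P n) : HasFDerivAt (Nf T) (LN T Z) Z :=
  HasFDerivAt.inner ℝ ((p2 n).hasFDerivAt) ((T.comp (p1 n)).hasFDerivAt)

theorem hasFDerivAt_Df (Z : P n) : HasFDerivAt (Df n) (LD Z) Z :=
  HasFDerivAt.inner ℝ ((p2 n).hasFDerivAt) ((p1 n).hasFDerivAt)

theorem LN_apply (T : F n →L[ℝ] F n) (Z W : P n) :
    LN T Z W = ⟪p2 n Z, T (p1 n W)⟫ + ⟪p2 n W, T (p1 n Z)⟫ := by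
  simp [LN, fderivInnerCLM_apply]

theorem LD_apply (Z W : P n) :
    LD Z W = ⟪p2 n Z, p1 n W⟫ + ⟪p2 n W, p1 n Z⟫ := by
  simp [LD, fderivInnerCLM_apply]

end BRQ

end BRQAux

namespace BRQ

theorem inner_Amap (T : F n →L[ℝ] F n) (Z W : P n) :
    ⟪Amap T Z, W⟫ = ⟪T (p2 n Z), p1 n W⟫ + ⟪T (p1 n Z), p2 n W⟫ := by
  simp [Amap, es, WithLp.prod_inner_apply, p1, p2]

theorem inner_Bmap (Z W : P n) :
    ⟪Bmap n Z, W⟫ = ⟪p2 n Z, p1 n W⟫ + ⟪p1 n Z, p2 n W⟫ := by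
  simp [Bmap, es, WithLp.prod_inner_apply, p1, p2]

theorem hasGradientAt_Gf (T : F n →L[ℝ] F n) (hsym : ∀ x y, ⟪T x, y⟫ = ⟪x, T y⟫)
    (Z : P n) (hZ : Df n Z ≠ 0) :
    HasGradientAt (fun Y => Nf T Y * (Df n Y)⁻¹) (Gf T Z) Z := by
  have h1 : HasFDerivAt (fun Y => (Df n Y)⁻¹) (-(Df n Z ^ 2)⁻¹ • LD Z) Z :=
    (hasDerivAt_inv hZ).comp_hasFDerivAt Z (hasFDerivAt_Df Z)
  have hE : HasFDerivAt (fun Y => Nf T Y * (Df n Y)⁻¹)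
      (Nf T Z • (-(Df n Z ^ 2)⁻¹ • LD Z) + (Df n Z)⁻¹ • LN T Z) Z :=
    (hasFDerivAt_Nf T Z).mul h1
  have := hE.hasGradientAt
  convert this using 1
  apply (InnerProductSpace.toDual ℝ (P n)).injective
  rw [LinearIsometryEquiv.apply_symm_apply]
  ext W
  rw [eq_comm, InnerProductSpace.toDual_apply_apply]
  simp only [Gf, inner_sub_left, real_inner_smul_left, inner_Amap, inner_Bmap,
    ContinuousLinearMap.add_apply, ContinuousLinearMap.smul_apply, LN_apply, LD_apply,
    smul_eq_mul, ContinuousLinearMap.coe_smul', Pi.smul_apply]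
  rw [hsym (p2 n Z) (p1 n W), real_inner_comm (T (p1 n Z)) (p2 n W),
    real_inner_comm (p1 n Z) (p2 n W)]
  field_simp
  ring

end BRQ

set_option maxHeartbeats 1000000 in
set_option synthInstance.maxHeartbeats 200000 in
/-- flipped-Hessian coercivity of the bivariate Rayleigh quotient of a
symmetric matrix at the ground-state critical point `Z* = (ψ*, ψ*)`, on the orthogonal
complement of the ground state: `⟪RX, ∇²E(Z*)X⟫ ≥ γ(‖u‖² + ‖v‖²)` for `X = (u, v)`
with `u, v ⟂ ψ*`. -/
theorem bivariate_rayleigh_flipped_hessian_coercive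
    {n : ℕ} (T : EuclideanSpace ℝ (Fin n) →L[ℝ] EuclideanSpace ℝ (Fin n))
    (hsym : ∀ x y, ⟪T x, y⟫ = ⟪x, T y⟫)
    (E₀ γ : ℝ) (hγ : 0 < γ)
    (ψ : EuclideanSpace ℝ (Fin n)) (hψ : ‖ψ‖ = 1)
    (heig : T ψ = E₀ • ψ)
    (hsimple : Module.End.eigenspace
        (T : EuclideanSpace ℝ (Fin n) →ₗ[ℝ] EuclideanSpace ℝ (Fin n)) E₀
      = Submodule.span ℝ {ψ})
    (hgap : ∀ μ ∈ spectrum ℝ T, μ ≠ E₀ → E₀ + γ ≤ μ) :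
    ∀ u v : EuclideanSpace ℝ (Fin n), ⟪u, ψ⟫ = 0 → ⟪v, ψ⟫ = 0 →
      γ * (‖u‖ ^ 2 + ‖v‖ ^ 2) ≤
        ⟪(WithLp.equiv 2 (EuclideanSpace ℝ (Fin n) × EuclideanSpace ℝ (Fin n))).symm (v, u),
          fderiv ℝ
            (gradient (fun Z : WithLp 2 (EuclideanSpace ℝ (Fin n) × EuclideanSpace ℝ (Fin n)) =>
              ⟪(WithLp.equiv 2 _ Z).2, T ((WithLp.equiv 2 _ Z).1)⟫ /
                ⟪(WithLp.equiv 2 _ Z).2, (WithLp.equiv 2 _ Z).1⟫))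
            ((WithLp.equiv 2 (EuclideanSpace ℝ (Fin n) × EuclideanSpace ℝ (Fin n))).symm (ψ, ψ))
            ((WithLp.equiv 2 (EuclideanSpace ℝ (Fin n) × EuclideanSpace ℝ (Fin n))).symm (u, v))⟫ := by
  intro u v hu hv
  open BRQ in
  set Z₀ : P n := (WithLp.equiv 2 (F n × F n)).symm (ψ, ψ) with hZ₀def
  set X : P n := (WithLp.equiv 2 (F n × F n)).symm (u, v) with hXdef
  -- basic evaluations
  have hp1Z₀ : p1 n Z₀ = ψ := rfl
  have hp2Z₀ : p2 n Z₀ = ψ := rfl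
  have hp1X : p1 n X = u := rfl
  have hp2X : p2 n X = v := rfl
  have hψψ : ⟪ψ, ψ⟫ = 1 := by
    rw [real_inner_self_eq_norm_sq, hψ]; norm_num
  have hDf0 : Df n Z₀ = 1 := by
    show ⟪p2 n Z₀, p1 n Z₀⟫ = 1
    rw [hp1Z₀, hp2Z₀, hψψ]
  have hNf0 : Nf T Z₀ = E₀ := by
    show ⟪p2 n Z₀, T (p1 n Z₀)⟫ = E₀
    rw [hp1Z₀, hp2Z₀, heig, real_inner_smul_right, hψψ, mul_one]
  have hDne : Df n Z₀ ≠ 0 := by rw [hDf0]; norm_num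
  have hLDX : LD Z₀ X = 0 := by
    rw [LD_apply, hp1X, hp2X, hp1Z₀, hp2Z₀, real_inner_comm u ψ, hu, hv, add_zero]
  have hLNX : LN T Z₀ X = 0 := by
    rw [LN_apply, hp1X, hp2X, hp1Z₀, hp2Z₀, heig, real_inner_smul_right, hv, mul_zero,
      ← hsym, heig, real_inner_smul_left, real_inner_comm u ψ, hu, mul_zero, add_zero]
  -- derivatives of Gf at Z₀
  have h1 : HasFDerivAt (fun Y => (Df n Y)⁻¹) (-(Df n Z₀ ^ 2)⁻¹ • LD Z₀) Z₀ :=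
    (hasDerivAt_inv hDne).comp_hasFDerivAt Z₀ (hasFDerivAt_Df Z₀)
  have h2 : HasFDerivAt (fun Y => (Df n Y)⁻¹ * (Df n Y)⁻¹)
      ((Df n Z₀)⁻¹ • (-(Df n Z₀ ^ 2)⁻¹ • LD Z₀) + (Df n Z₀)⁻¹ • (-(Df n Z₀ ^ 2)⁻¹ • LD Z₀)) Z₀ :=
    h1.mul h1
  have h3 : HasFDerivAt (fun Y => Nf T Y * ((Df n Y)⁻¹ * (Df n Y)⁻¹))
      (Nf T Z₀ • ((Df n Z₀)⁻¹ • (-(Df n Z₀ ^ 2)⁻¹ • LD Z₀) +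
          (Df n Z₀)⁻¹ • (-(Df n Z₀ ^ 2)⁻¹ • LD Z₀)) +
        ((Df n Z₀)⁻¹ * (Df n Z₀)⁻¹) • LN T Z₀) Z₀ :=
    (hasFDerivAt_Nf T Z₀).mul h2
  have : ContinuousSMul ℝ (P n) := inferInstance
  have h4 : HasFDerivAt (fun Y => (Df n Y)⁻¹ • Amap T Y)
      ((Df n Z₀)⁻¹ • (Amap T) + (-(Df n Z₀ ^ 2)⁻¹ • LD Z₀).smulRight (Amap T Z₀)) Z₀ :=
    h1.smul (Amap T).hasFDerivAt
  have h5 : HasFDerivAt (fun Y => (Nf T Y * ((Df n Y)⁻¹ * (Df n Y)⁻¹)) • Bmap n Y)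
      ((Nf T Z₀ * ((Df n Z₀)⁻¹ * (Df n Z₀)⁻¹)) • (Bmap n) +
        (Nf T Z₀ • ((Df n Z₀)⁻¹ • (-(Df n Z₀ ^ 2)⁻¹ • LD Z₀) +
            (Df n Z₀)⁻¹ • (-(Df n Z₀ ^ 2)⁻¹ • LD Z₀)) +
          ((Df n Z₀)⁻¹ * (Df n Z₀)⁻¹) • LN T Z₀).smulRight (Bmap n Z₀)) Z₀ :=
    h3.smul (Bmap n).hasFDerivAt
  have hG : HasFDerivAt (Gf T)
      (((Df n Z₀)⁻¹ • (Amap T) + (-(Df n Z₀ ^ 2)⁻¹ • LD Z₀).smulRight (Amap T Z₀)) -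
        ((Nf T Z₀ * ((Df n Z₀)⁻¹ * (Df n Z₀)⁻¹)) • (Bmap n) +
          (Nf T Z₀ • ((Df n Z₀)⁻¹ • (-(Df n Z₀ ^ 2)⁻¹ • LD Z₀) +
              (Df n Z₀)⁻¹ • (-(Df n Z₀ ^ 2)⁻¹ • LD Z₀)) +
            ((Df n Z₀)⁻¹ * (Df n Z₀)⁻¹) • LN T Z₀).smulRight (Bmap n Z₀))) Z₀ :=
    h4.sub h5
  -- the statement's function equals Nf/Df
  have hEfun : (fun Z : WithLp 2 (EuclideanSpace ℝ (Fin n) × EuclideanSpace ℝ (Fin n)) =>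
        ⟪(WithLp.equiv 2 _ Z).2, T ((WithLp.equiv 2 _ Z).1)⟫ /
          ⟪(WithLp.equiv 2 _ Z).2, (WithLp.equiv 2 _ Z).1⟫)
      = fun Y => Nf T Y * (Df n Y)⁻¹ := by
    funext Y
    rw [div_eq_mul_inv]
    rfl
  -- gradient agrees with Gf near Z₀
  have hDcont : Continuous (Df n) := (p2 n).continuous.inner (p1 n).continuous
  have hnear : ∀ᶠ Y in nhds Z₀, Df n Y ≠ 0 := hDcont.continuousAt.eventually_ne hDne
  have hfeq : gradient (fun Y => Nf T Y * (Df n Y)⁻¹) =ᶠ[nhds Z₀] Gf T :=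
    hnear.mono fun Y hY => (hasGradientAt_Gf T hsym Y hY).gradient
  rw [hEfun, hfeq.fderiv_eq, hG.fderiv]
  -- evaluate
  have hgapu := gap_lemma T hsym E₀ γ ψ hsimple hgap u hu
  have hgapv := gap_lemma T hsym E₀ γ ψ hsimple hgap v hv
  have hRA : ⟪(WithLp.equiv 2 (EuclideanSpace ℝ (Fin n) × EuclideanSpace ℝ (Fin n))).symm (v, u),
      Amap T X⟫ = ⟪v, T v⟫ + ⟪u, T u⟫ := by
    rw [real_inner_comm, inner_Amap, hp1X, hp2X]
    rw [hsym, hsym]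
    rfl
  have hRB : ⟪(WithLp.equiv 2 (EuclideanSpace ℝ (Fin n) × EuclideanSpace ℝ (Fin n))).symm (v, u),
      Bmap n X⟫ = ⟪v, v⟫ + ⟪u, u⟫ := by
    rw [real_inner_comm, inner_Bmap, hp1X, hp2X]
    rw [real_inner_comm v, real_inner_comm u]
    rfl
  simp only [ContinuousLinearMap.sub_apply, ContinuousLinearMap.add_apply,
    ContinuousLinearMap.coe_smul', Pi.smul_apply, ContinuousLinearMap.smulRight_apply,
    ContinuousLinearMap.smul_apply, hLDX, hLNX, hDf0, hNf0, smul_eq_mul, mul_zero, zero_smul,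
    smul_zero, add_zero, zero_add, inv_one, one_smul, mul_one, one_mul]
  rw [inner_sub_right, hRA, real_inner_smul_right, hRB,
    real_inner_self_eq_norm_sq u, real_inner_self_eq_norm_sq v]
  nlinarith [hgapu, hgapv]
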